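/- For an isosceles right triangle with legs of length a > 0, the bulging-triangle edge lengths satisfy |AB~|² = |BC~|² + |CA~|² = π²a²/4, i.e., the Pythagorean theorem holds exactly. -/

import Mathlib

open Real

theorem isosceles_bulging_pythagoras (a : ℝ) (ha : 0 < a) :
    ((a ^ 2 + a ^ 2) / a * Real.arctan (a / a)) ^ 2 =
      (Real.sqrt (a ^ 2 + a ^ 2) * (π / 2 - Real.arctan (a / a))) ^ 2 +
        (Real.sqrt (a ^ 2 + a ^ 2) * Real.arctan (a / a)) ^ 2 ∧
    ((a ^ 2 + a ^ 2) / a * Real.arctan (a / a)) ^ 2 = π ^ 2 * a ^ 2 / 4 := by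
  have h1 : a / a = 1 := div_self ha.ne'
  have h2 : Real.arctan 1 = π / 4 := Real.arctan_one
  have h3 : Real.sqrt (a ^ 2 + a ^ 2) ^ 2 = a ^ 2 + a ^ 2 := by
    rw [Real.sq_sqrt]; positivity
  rw [h1, h2]
  constructor
  · field_simp
    rw [Real.sq_sqrt (by positivity)]
    ring
  · field_simp
    ring
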